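/- arXiv:2103.04737 — 2 statements merged into one kernel-verified Lean document; each statement's English description precedes it below -/
import Mathlib

section
/- Let a ∈ Δ_n^*, b ∈ Δ_m^*, C ∈ ℝ^{n×m}, ε ≥ 0, r ≥ 1 and 0 < α ≤ 1/r. Set L_{ε,α} := sqrt( 3( 2‖C‖₂²/α⁴ + ((ε + 2‖C‖₂)/α³)² ) ), where ‖C‖₂ denotes the spectral norm of C. Then for all ξ₁ = (Q₁,R₁,g₁) and ξ₂ = (Q₂,R₂,g₂) in C(a,b,r,α) with strictly positive entries, ‖∇F_ε(ξ₁) − ∇F_ε(ξ₂)‖₂ ≤ L_{ε,α} ‖(log Q₁ − log Q₂, log R₁ − log R₂, log g₁ − log g₂)‖₂, where ∇F_ε(Q,R,g) := ( C R Diag(1/g) + ε log Q, Cᵀ Q Diag(1/g) + ε log R, −𝒟(Qᵀ C R)/g² + ε log g ), 𝒟(·) extracts the diagonal of a square matrix, logarithms, squares and divisions are entrywise, and ‖·‖₂ is the Euclidean norm of the concatenated triple (Frobenius norm on the matrix blocks). -/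
open Matrix Finset Real
open scoped RealInnerProductSpace

noncomputable section

/-- Real matrices indexed by `Fin n × Fin m`. -/
abbrev Mat (n m : ℕ) : Type := Matrix (Fin n) (Fin m) ℝ

/-- Triples `(Q, R, g)` as in the low-rank OT factorization. -/
abbrev LRTriple (n m r : ℕ) : Type := Mat n r × Mat m r × (Fin r → ℝ)

/-- Pairs `(Q, R)` (fixed middle marginal `g`). -/
abbrev LRPair (n m r : ℕ) : Type := Mat n r × Mat m r

/-- The interior of the probability simplex Δ_n^*: strictly positive entries summing to 1. -/
def posSimplex (n : ℕ) : Set (Fin n → ℝ) := {a | (∀ i, 0 < a i) ∧ ∑ i, a i = 1}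

/-- Frobenius inner product ⟨C, P⟩ = Σ_{ij} C_ij P_ij. -/
def frobInner {n m : ℕ} (C P : Mat n m) : ℝ := ∑ i, ∑ j, C i j * P i j

/-- Entropy H(P) = −Σ_{ij} P_ij (log P_ij − 1) (with 0 log 0 = 0, as `Real.log 0 = 0`). -/
def matH {n m : ℕ} (P : Mat n m) : ℝ := -∑ i, ∑ j, P i j * (Real.log (P i j) - 1)

/-- Entropy of a vector. -/
def vecH {r : ℕ} (g : Fin r → ℝ) : ℝ := -∑ i, g i * (Real.log (g i) - 1)

/-- Kullback–Leibler divergence KL(P,Q) = Σ_{ij} P_ij (log(P_ij/Q_ij) − 1). -/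
def matKL {n m : ℕ} (P Q : Mat n m) : ℝ := ∑ i, ∑ j, P i j * (Real.log (P i j / Q i j) - 1)

/-- Kullback–Leibler divergence of vectors. -/
def vecKL {r : ℕ} (p q : Fin r → ℝ) : ℝ := ∑ i, p i * (Real.log (p i / q i) - 1)

/-- KL divergence on triples, summing over the three components. -/
def tripleKL {n m r : ℕ} (x y : LRTriple n m r) : ℝ :=
  matKL x.1 y.1 + matKL x.2.1 y.2.1 + vecKL x.2.2 y.2.2

/-- KL divergence on pairs, summing over the two components. -/
def pairKL {n m r : ℕ} (x y : LRPair n m r) : ℝ := matKL x.1 y.1 + matKL x.2 y.2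

/-- Euclidean inner product on triples. -/
def tripleInner {n m r : ℕ} (x y : LRTriple n m r) : ℝ :=
  frobInner x.1 y.1 + frobInner x.2.1 y.2.1 + ∑ i, x.2.2 i * y.2.2 i

/-- Euclidean inner product on pairs. -/
def pairInner {n m r : ℕ} (x y : LRPair n m r) : ℝ := frobInner x.1 y.1 + frobInner x.2 y.2

/-- Squared Euclidean norm of a triple (Frobenius on matrix blocks). -/
def tripleNormSq {n m r : ℕ} (x : LRTriple n m r) : ℝ :=
  (∑ i, ∑ j, (x.1 i j) ^ 2) + (∑ i, ∑ j, (x.2.1 i j) ^ 2) + ∑ i, (x.2.2 i) ^ 2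

/-- Squared Euclidean norm of a pair (Frobenius on matrix blocks). -/
def pairNormSq {n m r : ℕ} (x : LRPair n m r) : ℝ :=
  (∑ i, ∑ j, (x.1 i j) ^ 2) + (∑ i, ∑ j, (x.2 i j) ^ 2)

/-- The transport polytope Π_{a,b} of couplings with marginals `a` and `b`. -/
def couplings {n m : ℕ} (a : Fin n → ℝ) (b : Fin m → ℝ) : Set (Mat n m) :=
  {P | (∀ i j, 0 ≤ P i j) ∧ (∀ i, ∑ j, P i j = a i) ∧ (∀ j, ∑ i, P i j = b j)}

/-- The nonnegative rank: smallest `q` such that `M` is a sum of `q` nonnegative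
rank-one matrices. -/
def nonnegRank {n m : ℕ} (M : Mat n m) : ℕ :=
  sInf {q : ℕ | ∃ f : Fin q → Mat n m,
    (∀ i, (f i).rank = 1 ∧ ∀ k l, 0 ≤ f i k l) ∧ M = ∑ i, f i}

/-- Π_{a,b}(r): couplings with nonnegative rank at most `r`. -/
def couplingsRank {n m : ℕ} (a : Fin n → ℝ) (b : Fin m → ℝ) (r : ℕ) : Set (Mat n m) :=
  {P | P ∈ couplings a b ∧ nonnegRank P ≤ r}

/-- 𝒞₁(a,b,r): `Q, R` nonnegative with row sums `a`, `b`, and `g > 0`. -/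
def C1set {n m : ℕ} (a : Fin n → ℝ) (b : Fin m → ℝ) (r : ℕ) : Set (LRTriple n m r) :=
  {x | (∀ i j, 0 ≤ x.1 i j) ∧ (∀ i j, 0 ≤ x.2.1 i j) ∧ (∀ i, 0 < x.2.2 i) ∧
    (∀ i, ∑ j, x.1 i j = a i) ∧ (∀ i, ∑ j, x.2.1 i j = b i)}

/-- The closure of 𝒞₁(a,b,r): as 𝒞₁ but only `g ≥ 0`. -/
def C1barSet {n m : ℕ} (a : Fin n → ℝ) (b : Fin m → ℝ) (r : ℕ) : Set (LRTriple n m r) :=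
  {x | (∀ i j, 0 ≤ x.1 i j) ∧ (∀ i j, 0 ≤ x.2.1 i j) ∧ (∀ i, 0 ≤ x.2.2 i) ∧
    (∀ i, ∑ j, x.1 i j = a i) ∧ (∀ i, ∑ j, x.2.1 i j = b i)}

/-- 𝒞₁(a,b,r,α): as 𝒞₁ but with the lower bound `g ≥ α`. -/
def C1setAlpha {n m : ℕ} (a : Fin n → ℝ) (b : Fin m → ℝ) (r : ℕ) (α : ℝ) :
    Set (LRTriple n m r) :=
  {x | (∀ i j, 0 ≤ x.1 i j) ∧ (∀ i j, 0 ≤ x.2.1 i j) ∧ (∀ i, α ≤ x.2.2 i) ∧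
    (∀ i, ∑ j, x.1 i j = a i) ∧ (∀ i, ∑ j, x.2.1 i j = b i)}

/-- 𝒞₂(r): `Q, R, g` nonnegative with both column sums equal to `g`. -/
def C2set {n m : ℕ} (r : ℕ) : Set (LRTriple n m r) :=
  {x | (∀ i j, 0 ≤ x.1 i j) ∧ (∀ i j, 0 ≤ x.2.1 i j) ∧ (∀ i, 0 ≤ x.2.2 i) ∧
    (∀ j, ∑ i, x.1 i j = x.2.2 j) ∧ (∀ j, ∑ i, x.2.1 i j = x.2.2 j)}

/-- 𝒞(a,b,r) = 𝒞₁(a,b,r) ∩ 𝒞₂(r). -/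
def Cset {n m : ℕ} (a : Fin n → ℝ) (b : Fin m → ℝ) (r : ℕ) : Set (LRTriple n m r) :=
  C1set a b r ∩ C2set r

/-- 𝒞(a,b,r,α) = 𝒞₁(a,b,r,α) ∩ 𝒞₂(r). -/
def CsetAlpha {n m : ℕ} (a : Fin n → ℝ) (b : Fin m → ℝ) (r : ℕ) (α : ℝ) :
    Set (LRTriple n m r) :=
  C1setAlpha a b r α ∩ C2set r

/-- F_ε(Q,R,g) = ⟨C, Q Diag(1/g) Rᵀ⟩ − ε H((Q,R,g)). -/
def Fobj {n m r : ℕ} (C : Mat n m) (ε : ℝ) (x : LRTriple n m r) : ℝ :=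
  frobInner C (x.1 * Matrix.diagonal (fun i => (x.2.2 i)⁻¹) * x.2.1ᵀ) -
    ε * (matH x.1 + matH x.2.1 + vecH x.2.2)

/-- LOT_{r,ε} = inf of F_ε over 𝒞(a,b,r). -/
def LOTre {n m : ℕ} (a : Fin n → ℝ) (b : Fin m → ℝ) (C : Mat n m) (ε : ℝ) (r : ℕ) : ℝ :=
  sInf (Fobj C ε '' Cset a b r)

/-- LOT_{r,ε,α} = inf of F_ε over 𝒞(a,b,r,α). -/
def LOTreAlpha {n m : ℕ} (a : Fin n → ℝ) (b : Fin m → ℝ) (C : Mat n m) (ε : ℝ) (r : ℕ)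
    (α : ℝ) : ℝ :=
  sInf (Fobj C ε '' CsetAlpha a b r α)

/-- Spectral norm (ℓ²→ℓ² operator norm) of a matrix. -/
def specNorm {n m : ℕ} (C : Mat n m) : ℝ :=
  ‖LinearMap.toContinuousLinearMap (Matrix.toEuclideanLin C)‖

/-- The gradient ∇F_ε(Q,R,g) =
(C R Diag(1/g) + ε log Q, Cᵀ Q Diag(1/g) + ε log R, −𝒟(Qᵀ C R)/g² + ε log g). -/
def gradF {n m r : ℕ} (C : Mat n m) (ε : ℝ) (x : LRTriple n m r) : LRTriple n m r :=
  (Matrix.of fun i k => (C * x.2.1) i k * (x.2.2 k)⁻¹ + ε * Real.log (x.1 i k),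
   Matrix.of fun j k => (Cᵀ * x.1) j k * (x.2.2 k)⁻¹ + ε * Real.log (x.2.1 j k),
   fun k => -((x.1ᵀ * C * x.2.1) k k) / (x.2.2 k) ^ 2 + ε * Real.log (x.2.2 k))

/-- Entrywise logarithm of a triple. -/
def logTriple {n m r : ℕ} (x : LRTriple n m r) : LRTriple n m r :=
  (Matrix.of fun i k => Real.log (x.1 i k), Matrix.of fun j k => Real.log (x.2.1 j k),
   fun k => Real.log (x.2.2 k))

/-- The feasible set Π_{a,g} × Π_{b,g}. -/
def pairFeasible {n m r : ℕ} (a : Fin n → ℝ) (b : Fin m → ℝ) (g : Fin r → ℝ) :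
    Set (LRPair n m r) :=
  {u | u.1 ∈ couplings a g ∧ u.2 ∈ couplings b g}

/-- f_ε(Q,R) = ⟨C, Q Diag(1/g) Rᵀ⟩ − ε (H(Q) + H(R)) for fixed `g`. -/
def fobj {n m r : ℕ} (C : Mat n m) (g : Fin r → ℝ) (ε : ℝ) (x : LRPair n m r) : ℝ :=
  frobInner C (x.1 * Matrix.diagonal (fun i => (g i)⁻¹) * x.2ᵀ) - ε * (matH x.1 + matH x.2)

/-- LOT_{r,g,ε} = inf of f_ε over Π_{a,g} × Π_{b,g}. -/
def LOTfix {n m r : ℕ} (a : Fin n → ℝ) (b : Fin m → ℝ) (g : Fin r → ℝ) (C : Mat n m)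
    (ε : ℝ) : ℝ :=
  sInf (fobj C g ε '' pairFeasible a b g)

/-- The gradient ∇f_ε(Q,R) = (C R Diag(1/g) + ε log Q, Cᵀ Q Diag(1/g) + ε log R). -/
def gradf {n m r : ℕ} (C : Mat n m) (g : Fin r → ℝ) (ε : ℝ) (x : LRPair n m r) :
    LRPair n m r :=
  (Matrix.of fun i k => (C * x.2) i k * (g k)⁻¹ + ε * Real.log (x.1 i k),
   Matrix.of fun j k => (Cᵀ * x.1) j k * (g k)⁻¹ + ε * Real.log (x.2 j k))

/-- Entrywise logarithm of a pair. -/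
def logPair {n m r : ℕ} (x : LRPair n m r) : LRPair n m r :=
  (Matrix.of fun i k => Real.log (x.1 i k), Matrix.of fun j k => Real.log (x.2 j k))

end


private lemma sq_le_of_abs_le'' {x y : ℝ} (h : |x| ≤ y) : x ^ 2 ≤ y ^ 2 := by
  nlinarith [neg_abs_le x, le_abs_self x, abs_nonneg x]

private lemma three_sq'' (a b c : ℝ) : (a + b + c) ^ 2 ≤ 3 * (a ^ 2 + b ^ 2 + c ^ 2) := by
  nlinarith [sq_nonneg (a - b), sq_nonneg (a - c), sq_nonneg (b - c)]

private lemma log_lips_aux {x y : ℝ} (hx : 0 < x) (hx1 : x ≤ 1) (hy : 0 < y) (h : y ≤ x) :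
    x - y ≤ Real.log x - Real.log y := by
  have h1 : Real.log (y / x) ≤ y / x - 1 := Real.log_le_sub_one_of_pos (div_pos hy hx)
  rw [Real.log_div hy.ne' hx.ne'] at h1
  have h2 : x * (Real.log y - Real.log x) ≤ y - x := by
    have := mul_le_mul_of_nonneg_left h1 hx.le
    have hx' : x * (y / x - 1) = y - x := by field_simp
    linarith [hx' ▸ this]
  have h3 : 0 ≤ Real.log x - Real.log y := by
    have := Real.log_le_log hy h
    linarith
  nlinarith

private lemma log_lips' {x y : ℝ} (hx : 0 < x) (hx1 : x ≤ 1) (hy : 0 < y) (hy1 : y ≤ 1) :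
    |x - y| ≤ |Real.log x - Real.log y| := by
  rcases le_total y x with h | h
  · rw [abs_of_nonneg (by linarith), abs_of_nonneg (by linarith [Real.log_le_log hy h])]
    exact log_lips_aux hx hx1 hy h
  · rw [abs_of_nonpos (by linarith), abs_of_nonpos (by linarith [Real.log_le_log hx h])]
    have := log_lips_aux hy hy1 hx h
    linarith

private lemma inv_lips_aux {α x y : ℝ} (hα : 0 < α) (hx : α ≤ x) (hy : α ≤ y) (h : y ≤ x) :
    y⁻¹ - x⁻¹ ≤ α⁻¹ * (Real.log x - Real.log y) := by
  have hx0 : 0 < x := lt_of_lt_of_le hα hx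
  have hy0 : 0 < y := lt_of_lt_of_le hα hy
  have h1 : Real.log (y / x) ≤ y / x - 1 := Real.log_le_sub_one_of_pos (div_pos hy0 hx0)
  rw [Real.log_div hy0.ne' hx0.ne'] at h1
  have h2 : x - y ≤ x * (Real.log x - Real.log y) := by
    have := mul_le_mul_of_nonneg_left h1 hx0.le
    have hx' : x * (y / x - 1) = y - x := by field_simp
    nlinarith
  have h3 : 0 ≤ Real.log x - Real.log y := by
    have := Real.log_le_log hy0 h; linarith
  have e : y⁻¹ - x⁻¹ = (x - y) * (x⁻¹ * y⁻¹) := by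
    field_simp
  rw [e]
  calc (x - y) * (x⁻¹ * y⁻¹) ≤ (x * (Real.log x - Real.log y)) * (x⁻¹ * y⁻¹) := by
        apply mul_le_mul_of_nonneg_right h2 (by positivity)
    _ = (Real.log x - Real.log y) * y⁻¹ := by field_simp
    _ ≤ (Real.log x - Real.log y) * α⁻¹ := by
        apply mul_le_mul_of_nonneg_left _ h3
        exact inv_anti₀ hα hy
    _ = α⁻¹ * (Real.log x - Real.log y) := by ring

private lemma inv_lips' {α x y : ℝ} (hα : 0 < α) (hx : α ≤ x) (hy : α ≤ y) :
    |x⁻¹ - y⁻¹| ≤ α⁻¹ * |Real.log x - Real.log y| := by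
  have hx0 : 0 < x := lt_of_lt_of_le hα hx
  have hy0 : 0 < y := lt_of_lt_of_le hα hy
  rcases le_total y x with h | h
  · rw [abs_of_nonpos (by simp [inv_anti₀ hy0 h, sub_nonpos]),
      abs_of_nonneg (by linarith [Real.log_le_log hy0 h])]
    have := inv_lips_aux hα hx hy h
    linarith
  · rw [abs_of_nonneg (by simp [inv_anti₀ hx0 h, sub_nonneg]),
      abs_of_nonpos (by linarith [Real.log_le_log hx0 h])]
    have := inv_lips_aux hα hy hx h
    linarith

private lemma inv_sq_lips' {α x y : ℝ} (hα : 0 < α) (hx : α ≤ x) (hy : α ≤ y) :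
    |(x ^ 2)⁻¹ - (y ^ 2)⁻¹| ≤ 2 * α⁻¹ ^ 2 * |Real.log x - Real.log y| := by
  have hx0 : 0 < x := lt_of_lt_of_le hα hx
  have hy0 : 0 < y := lt_of_lt_of_le hα hy
  have e : (x ^ 2)⁻¹ - (y ^ 2)⁻¹ = (x⁻¹ - y⁻¹) * (x⁻¹ + y⁻¹) := by field_simp; ring
  rw [e, abs_mul]
  have h1 := inv_lips' hα hx hy
  have h2 : |x⁻¹ + y⁻¹| ≤ 2 * α⁻¹ := by
    rw [abs_of_nonneg (by positivity)]
    have := inv_anti₀ hα hx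
    have := inv_anti₀ hα hy
    linarith
  calc |x⁻¹ - y⁻¹| * |x⁻¹ + y⁻¹| ≤ (α⁻¹ * |Real.log x - Real.log y|) * (2 * α⁻¹) := by
        apply mul_le_mul h1 h2 (abs_nonneg _) (by positivity)
    _ = 2 * α⁻¹ ^ 2 * |Real.log x - Real.log y| := by ring

private lemma specNorm_nonneg' {n m : ℕ} (C : Mat n m) : 0 ≤ specNorm C := norm_nonneg _

private lemma spec_bound' {n m : ℕ} (C : Mat n m) (v : Fin m → ℝ) :
    ∑ i, (∑ j, C i j * v j) ^ 2 ≤ specNorm C ^ 2 * ∑ j, v j ^ 2 := by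
  have h := (LinearMap.toContinuousLinearMap (Matrix.toEuclideanLin C)).le_opNorm
      ((WithLp.equiv 2 (Fin m → ℝ)).symm v)
  have he : ∀ i, (LinearMap.toContinuousLinearMap (Matrix.toEuclideanLin C)
      ((WithLp.equiv 2 (Fin m → ℝ)).symm v)) i = ∑ j, C i j * v j := by
    intro i
    simp [Matrix.toEuclideanLin_apply, Matrix.mulVec, dotProduct]
  rw [EuclideanSpace.norm_eq, EuclideanSpace.norm_eq] at h
  simp only [he] at h
  have h2 : Real.sqrt (∑ i, (∑ j, C i j * v j) ^ 2) ≤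
      specNorm C * Real.sqrt (∑ j, (v j) ^ 2) := by
    convert h using 3 <;> simp [sq_abs, Real.norm_eq_abs, specNorm]
  have hA : (0:ℝ) ≤ ∑ i, (∑ j, C i j * v j) ^ 2 := by positivity
  have hB : (0:ℝ) ≤ ∑ j, v j ^ 2 := by positivity
  calc ∑ i, (∑ j, C i j * v j) ^ 2 = Real.sqrt (∑ i, (∑ j, C i j * v j) ^ 2) ^ 2 := by
        rw [Real.sq_sqrt hA]
    _ ≤ (specNorm C * Real.sqrt (∑ j, v j ^ 2)) ^ 2 := by
        apply pow_le_pow_left₀ (Real.sqrt_nonneg _) h2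
    _ = specNorm C ^ 2 * ∑ j, v j ^ 2 := by
        rw [mul_pow, Real.sq_sqrt hB]

private lemma specNorm_transpose' {n m : ℕ} (C : Mat n m) : specNorm Cᵀ = specNorm C := by
  have hct : Cᵀ = Cᴴ := by ext i j; simp [Matrix.conjTranspose_apply]
  rw [specNorm, hct, Matrix.toEuclideanLin_conjTranspose_eq_adjoint,
    LinearMap.adjoint_toContinuousLinearMap]
  exact ContinuousLinearMap.adjoint.norm_map _

private lemma assemble' (K ε α SQ SR Sg : ℝ) (hK : 0 ≤ K) (hε : 0 ≤ ε) (hα : 0 < α)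
    (hα1 : α ≤ 1) (hSQ : 0 ≤ SQ) (hSR : 0 ≤ SR) (hSg : 0 ≤ Sg) :
    3 * (K ^ 2 * α⁻¹ ^ 2 * SR + K ^ 2 * α⁻¹ ^ 2 * Sg + ε ^ 2 * SQ)
    + 3 * (K ^ 2 * α⁻¹ ^ 2 * SQ + K ^ 2 * α⁻¹ ^ 2 * Sg + ε ^ 2 * SR)
    + 3 * (K ^ 2 * α⁻¹ ^ 2 * SQ + K ^ 2 * α⁻¹ ^ 4 * SR + ((2 * K + ε) * α⁻¹ ^ 2) ^ 2 * Sg)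
    ≤ 3 * (2 * K ^ 2 / α ^ 4 + ((ε + 2 * K) / α ^ 3) ^ 2) * (SQ + SR + Sg) := by
  have hβ : (1:ℝ) ≤ α⁻¹ := by
    have := inv_anti₀ hα hα1; simpa using this
  have hβ0 : (0:ℝ) ≤ α⁻¹ := by positivity
  have e : 2 * K ^ 2 / α ^ 4 + ((ε + 2 * K) / α ^ 3) ^ 2
      = 2 * K ^ 2 * α⁻¹ ^ 4 + (ε + 2 * K) ^ 2 * α⁻¹ ^ 6 := by
    field_simp
  rw [e]
  have hb2 : α⁻¹ ^ 2 ≤ α⁻¹ ^ 4 := pow_le_pow_right₀ hβ (by norm_num)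
  have hb4 : α⁻¹ ^ 4 ≤ α⁻¹ ^ 6 := pow_le_pow_right₀ hβ (by norm_num)
  have h1 : (1:ℝ) ≤ α⁻¹ ^ 6 := by
    calc (1:ℝ) = 1 ^ 6 := by norm_num
      _ ≤ α⁻¹ ^ 6 := pow_le_pow_left₀ zero_le_one hβ 6
  have hee : ε ^ 2 ≤ (ε + 2 * K) ^ 2 := by nlinarith
  have t1 : K ^ 2 * α⁻¹ ^ 2 ≤ K ^ 2 * α⁻¹ ^ 4 := mul_le_mul_of_nonneg_left hb2 (sq_nonneg K)
  have t2 : ε ^ 2 * 1 ≤ (ε + 2 * K) ^ 2 * α⁻¹ ^ 6 :=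
    mul_le_mul hee h1 zero_le_one (sq_nonneg _)
  have t3 : (ε + 2 * K) ^ 2 * α⁻¹ ^ 4 ≤ (ε + 2 * K) ^ 2 * α⁻¹ ^ 6 :=
    mul_le_mul_of_nonneg_left hb4 (sq_nonneg _)
  have hcQ : ε ^ 2 + K ^ 2 * α⁻¹ ^ 2 + K ^ 2 * α⁻¹ ^ 2
      ≤ 2 * K ^ 2 * α⁻¹ ^ 4 + (ε + 2 * K) ^ 2 * α⁻¹ ^ 6 := by linarith
  have hcR : K ^ 2 * α⁻¹ ^ 2 + ε ^ 2 + K ^ 2 * α⁻¹ ^ 4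
      ≤ 2 * K ^ 2 * α⁻¹ ^ 4 + (ε + 2 * K) ^ 2 * α⁻¹ ^ 6 := by linarith
  have hcg : K ^ 2 * α⁻¹ ^ 2 + K ^ 2 * α⁻¹ ^ 2 + ((2 * K + ε) * α⁻¹ ^ 2) ^ 2
      ≤ 2 * K ^ 2 * α⁻¹ ^ 4 + (ε + 2 * K) ^ 2 * α⁻¹ ^ 6 := by nlinarith
  nlinarith [mul_le_mul_of_nonneg_right hcQ hSQ, mul_le_mul_of_nonneg_right hcR hSR,
    mul_le_mul_of_nonneg_right hcg hSg]


private lemma blockQ_bound {n m r : ℕ} (C : Mat n m) (ε α : ℝ) (hα : 0 < α)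
    (Q₁ Q₂ : Mat n r) (R₁ R₂ : Mat m r) (g₁ g₂ : Fin r → ℝ)
    (hg1 : ∀ k, α ≤ g₁ k) (hg2 : ∀ k, α ≤ g₂ k) (hg2le : ∀ k, g₂ k ≤ 1)
    (hR1pos : ∀ j k, 0 < R₁ j k) (hR1le : ∀ j k, R₁ j k ≤ 1)
    (hR2pos : ∀ j k, 0 < R₂ j k) (hR2le : ∀ j k, R₂ j k ≤ 1)
    (hR2nn : ∀ j k, 0 ≤ R₂ j k) (hR2col : ∀ k, ∑ j, R₂ j k = g₂ k)
    (hQ1pos : ∀ i k, 0 < Q₁ i k) (hQ1le : ∀ i k, Q₁ i k ≤ 1)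
    (hQ2pos : ∀ i k, 0 < Q₂ i k) (hQ2le : ∀ i k, Q₂ i k ≤ 1) :
    ∑ i, ∑ k, ((C * R₁) i k * (g₁ k)⁻¹ + ε * Real.log (Q₁ i k)
        - ((C * R₂) i k * (g₂ k)⁻¹ + ε * Real.log (Q₂ i k))) ^ 2
    ≤ 3 * (specNorm C ^ 2 * α⁻¹ ^ 2 *
          (∑ j, ∑ k, (Real.log (R₁ j k) - Real.log (R₂ j k)) ^ 2)
        + specNorm C ^ 2 * α⁻¹ ^ 2 * (∑ k, (Real.log (g₁ k) - Real.log (g₂ k)) ^ 2)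
        + ε ^ 2 * (∑ i, ∑ k, (Real.log (Q₁ i k) - Real.log (Q₂ i k)) ^ 2)) := by
  have hKnn := specNorm_nonneg' C
  have eswap1 : ∑ j, ∑ k, (Real.log (R₁ j k) - Real.log (R₂ j k)) ^ 2
      = ∑ k, ∑ j, (Real.log (R₁ j k) - Real.log (R₂ j k)) ^ 2 := Finset.sum_comm
  have eswap2 : ∑ i, ∑ k, (Real.log (Q₁ i k) - Real.log (Q₂ i k)) ^ 2
      = ∑ k, ∑ i, (Real.log (Q₁ i k) - Real.log (Q₂ i k)) ^ 2 := Finset.sum_comm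
  rw [eswap1, eswap2, Finset.sum_comm]
  have perk : ∀ k : Fin r,
      ∑ i, ((C * R₁) i k * (g₁ k)⁻¹ + ε * Real.log (Q₁ i k)
        - ((C * R₂) i k * (g₂ k)⁻¹ + ε * Real.log (Q₂ i k))) ^ 2
      ≤ 3 * (specNorm C ^ 2 * α⁻¹ ^ 2 * (∑ j, (Real.log (R₁ j k) - Real.log (R₂ j k)) ^ 2)
          + specNorm C ^ 2 * α⁻¹ ^ 2 * (Real.log (g₁ k) - Real.log (g₂ k)) ^ 2
          + ε ^ 2 * ∑ i, (Real.log (Q₁ i k) - Real.log (Q₂ i k)) ^ 2) := by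
    intro k
    have hg10 : 0 < g₁ k := lt_of_lt_of_le hα (hg1 k)
    have hg20 : 0 < g₂ k := lt_of_lt_of_le hα (hg2 k)
    have hdec : ∀ i, (C * R₁) i k * (g₁ k)⁻¹ + ε * Real.log (Q₁ i k)
        - ((C * R₂) i k * (g₂ k)⁻¹ + ε * Real.log (Q₂ i k))
        = (∑ j, C i j * (R₁ j k - R₂ j k)) * (g₁ k)⁻¹
          + (∑ j, C i j * R₂ j k) * ((g₁ k)⁻¹ - (g₂ k)⁻¹)
          + ε * (Real.log (Q₁ i k) - Real.log (Q₂ i k)) := by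
      intro i
      simp only [Matrix.mul_apply, mul_sub]
      rw [Finset.sum_sub_distrib]
      ring
    have hA : ∑ i, ((∑ j, C i j * (R₁ j k - R₂ j k)) * (g₁ k)⁻¹) ^ 2
        ≤ specNorm C ^ 2 * α⁻¹ ^ 2 * ∑ j, (Real.log (R₁ j k) - Real.log (R₂ j k)) ^ 2 := by
      have ht : (g₁ k)⁻¹ ≤ α⁻¹ := inv_anti₀ hα (hg1 k)
      have ht0 : (0:ℝ) ≤ (g₁ k)⁻¹ := by positivity
      have hdR : ∑ j, (R₁ j k - R₂ j k) ^ 2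
          ≤ ∑ j, (Real.log (R₁ j k) - Real.log (R₂ j k)) ^ 2 := by
        refine Finset.sum_le_sum fun j _ => ?_
        have h := sq_le_of_abs_le'' (log_lips' (hR1pos j k) (hR1le j k) (hR2pos j k) (hR2le j k))
        rwa [sq_abs] at h
      calc ∑ i, ((∑ j, C i j * (R₁ j k - R₂ j k)) * (g₁ k)⁻¹) ^ 2
          = (∑ i, (∑ j, C i j * (R₁ j k - R₂ j k)) ^ 2) * ((g₁ k)⁻¹) ^ 2 := by
            simp only [mul_pow]; rw [← Finset.sum_mul]
        _ ≤ (specNorm C ^ 2 * ∑ j, (R₁ j k - R₂ j k) ^ 2) * (α⁻¹) ^ 2 := by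
            apply mul_le_mul (spec_bound' C _) (pow_le_pow_left₀ ht0 ht 2) (by positivity)
              (by positivity)
        _ ≤ (specNorm C ^ 2 * ∑ j, (Real.log (R₁ j k) - Real.log (R₂ j k)) ^ 2) * (α⁻¹) ^ 2 := by
            apply mul_le_mul_of_nonneg_right (mul_le_mul_of_nonneg_left hdR (by positivity))
              (by positivity)
        _ = specNorm C ^ 2 * α⁻¹ ^ 2 * ∑ j, (Real.log (R₁ j k) - Real.log (R₂ j k)) ^ 2 := by
            ring
    have hB : ∑ i, ((∑ j, C i j * R₂ j k) * ((g₁ k)⁻¹ - (g₂ k)⁻¹)) ^ 2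
        ≤ specNorm C ^ 2 * α⁻¹ ^ 2 * (Real.log (g₁ k) - Real.log (g₂ k)) ^ 2 := by
      have hΔ : ((g₁ k)⁻¹ - (g₂ k)⁻¹) ^ 2 ≤ α⁻¹ ^ 2 * (Real.log (g₁ k) - Real.log (g₂ k)) ^ 2 := by
        have h := sq_le_of_abs_le'' (inv_lips' hα (hg1 k) (hg2 k))
        calc ((g₁ k)⁻¹ - (g₂ k)⁻¹) ^ 2
            ≤ (α⁻¹ * |Real.log (g₁ k) - Real.log (g₂ k)|) ^ 2 := h
          _ = α⁻¹ ^ 2 * (Real.log (g₁ k) - Real.log (g₂ k)) ^ 2 := by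
              rw [mul_pow, sq_abs]
      have hR2sq : ∑ j, (R₂ j k) ^ 2 ≤ 1 := by
        have h1 : ∑ j, (R₂ j k) ^ 2 ≤ (∑ j, R₂ j k) ^ 2 :=
          Finset.sum_sq_le_sq_sum_of_nonneg (fun j _ => hR2nn j k)
        rw [hR2col k] at h1
        exact h1.trans (by nlinarith [hg20.le, hg2le k])
      calc ∑ i, ((∑ j, C i j * R₂ j k) * ((g₁ k)⁻¹ - (g₂ k)⁻¹)) ^ 2
          = (∑ i, (∑ j, C i j * R₂ j k) ^ 2) * ((g₁ k)⁻¹ - (g₂ k)⁻¹) ^ 2 := by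
            simp only [mul_pow]; rw [← Finset.sum_mul]
        _ ≤ (specNorm C ^ 2 * ∑ j, (R₂ j k) ^ 2) * ((g₁ k)⁻¹ - (g₂ k)⁻¹) ^ 2 := by
            apply mul_le_mul_of_nonneg_right (spec_bound' C _) (sq_nonneg _)
        _ ≤ (specNorm C ^ 2 * 1) * (α⁻¹ ^ 2 * (Real.log (g₁ k) - Real.log (g₂ k)) ^ 2) := by
            apply mul_le_mul (mul_le_mul_of_nonneg_left hR2sq (by positivity)) hΔ
              (sq_nonneg _) (by positivity)
        _ = specNorm C ^ 2 * α⁻¹ ^ 2 * (Real.log (g₁ k) - Real.log (g₂ k)) ^ 2 := by ring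
    have hE : ∑ i, (ε * (Real.log (Q₁ i k) - Real.log (Q₂ i k))) ^ 2
        = ε ^ 2 * ∑ i, (Real.log (Q₁ i k) - Real.log (Q₂ i k)) ^ 2 := by
      rw [Finset.mul_sum]
      exact Finset.sum_congr rfl fun i _ => by ring
    calc ∑ i, ((C * R₁) i k * (g₁ k)⁻¹ + ε * Real.log (Q₁ i k)
          - ((C * R₂) i k * (g₂ k)⁻¹ + ε * Real.log (Q₂ i k))) ^ 2
        = ∑ i, ((∑ j, C i j * (R₁ j k - R₂ j k)) * (g₁ k)⁻¹
          + (∑ j, C i j * R₂ j k) * ((g₁ k)⁻¹ - (g₂ k)⁻¹)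
          + ε * (Real.log (Q₁ i k) - Real.log (Q₂ i k))) ^ 2 := by
          exact Finset.sum_congr rfl fun i _ => by rw [hdec i]
      _ ≤ ∑ i, 3 * (((∑ j, C i j * (R₁ j k - R₂ j k)) * (g₁ k)⁻¹) ^ 2
          + ((∑ j, C i j * R₂ j k) * ((g₁ k)⁻¹ - (g₂ k)⁻¹)) ^ 2
          + (ε * (Real.log (Q₁ i k) - Real.log (Q₂ i k))) ^ 2) := by
          exact Finset.sum_le_sum fun i _ => three_sq'' _ _ _
      _ = 3 * ((∑ i, ((∑ j, C i j * (R₁ j k - R₂ j k)) * (g₁ k)⁻¹) ^ 2)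
          + (∑ i, ((∑ j, C i j * R₂ j k) * ((g₁ k)⁻¹ - (g₂ k)⁻¹)) ^ 2)
          + ∑ i, (ε * (Real.log (Q₁ i k) - Real.log (Q₂ i k))) ^ 2) := by
          rw [← Finset.mul_sum, Finset.sum_add_distrib, Finset.sum_add_distrib]
      _ ≤ _ := by rw [hE]; linarith [hA, hB]
  calc ∑ k, ∑ i, ((C * R₁) i k * (g₁ k)⁻¹ + ε * Real.log (Q₁ i k)
        - ((C * R₂) i k * (g₂ k)⁻¹ + ε * Real.log (Q₂ i k))) ^ 2
      ≤ ∑ k, 3 * (specNorm C ^ 2 * α⁻¹ ^ 2 *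
            (∑ j, (Real.log (R₁ j k) - Real.log (R₂ j k)) ^ 2)
          + specNorm C ^ 2 * α⁻¹ ^ 2 * (Real.log (g₁ k) - Real.log (g₂ k)) ^ 2
          + ε ^ 2 * ∑ i, (Real.log (Q₁ i k) - Real.log (Q₂ i k)) ^ 2) :=
        Finset.sum_le_sum fun k _ => perk k
    _ = _ := by
        rw [← Finset.mul_sum, Finset.sum_add_distrib, Finset.sum_add_distrib,
          ← Finset.mul_sum, ← Finset.mul_sum, ← Finset.mul_sum]

set_option maxHeartbeats 1000000 in
private lemma blockg_bound {n m r : ℕ} (C : Mat n m) (ε α : ℝ) (hε : 0 ≤ ε) (hα : 0 < α) (hα1 : α ≤ 1)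
    (Q₁ Q₂ : Mat n r) (R₁ R₂ : Mat m r) (g₁ g₂ : Fin r → ℝ)
    (hg1 : ∀ k, α ≤ g₁ k) (hg2 : ∀ k, α ≤ g₂ k)
    (hg1le : ∀ k, g₁ k ≤ 1) (hg2le : ∀ k, g₂ k ≤ 1)
    (hQ1pos : ∀ i k, 0 < Q₁ i k) (hQ1le : ∀ i k, Q₁ i k ≤ 1)
    (hQ2pos : ∀ i k, 0 < Q₂ i k) (hQ2le : ∀ i k, Q₂ i k ≤ 1)
    (hQ2nn : ∀ i k, 0 ≤ Q₂ i k) (hQ2col : ∀ k, ∑ i, Q₂ i k = g₂ k)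
    (hR1pos : ∀ j k, 0 < R₁ j k) (hR1le : ∀ j k, R₁ j k ≤ 1)
    (hR2pos : ∀ j k, 0 < R₂ j k) (hR2le : ∀ j k, R₂ j k ≤ 1)
    (hR1nn : ∀ j k, 0 ≤ R₁ j k) (hR1col : ∀ k, ∑ j, R₁ j k = g₁ k)
    (hR2nn : ∀ j k, 0 ≤ R₂ j k) (hR2col : ∀ k, ∑ j, R₂ j k = g₂ k) :
    ∑ k, (-((Q₁ᵀ * C * R₁) k k) / g₁ k ^ 2 + ε * Real.log (g₁ k)
        - (-((Q₂ᵀ * C * R₂) k k) / g₂ k ^ 2 + ε * Real.log (g₂ k))) ^ 2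
    ≤ 3 * (specNorm C ^ 2 * α⁻¹ ^ 2 *
          (∑ i, ∑ k, (Real.log (Q₁ i k) - Real.log (Q₂ i k)) ^ 2)
        + specNorm C ^ 2 * α⁻¹ ^ 4 *
          (∑ j, ∑ k, (Real.log (R₁ j k) - Real.log (R₂ j k)) ^ 2)
        + ((2 * specNorm C + ε) * α⁻¹ ^ 2) ^ 2 *
          (∑ k, (Real.log (g₁ k) - Real.log (g₂ k)) ^ 2)) := by
  have hKnn := specNorm_nonneg' C
  have hi1 : (1:ℝ) ≤ α⁻¹ := by
    have := inv_anti₀ hα hα1; simpa using this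
  have hi2 : (1:ℝ) ≤ α⁻¹ ^ 2 := by nlinarith
  have eswap1 : ∑ i, ∑ k, (Real.log (Q₁ i k) - Real.log (Q₂ i k)) ^ 2
      = ∑ k, ∑ i, (Real.log (Q₁ i k) - Real.log (Q₂ i k)) ^ 2 := Finset.sum_comm
  have eswap2 : ∑ j, ∑ k, (Real.log (R₁ j k) - Real.log (R₂ j k)) ^ 2
      = ∑ k, ∑ j, (Real.log (R₁ j k) - Real.log (R₂ j k)) ^ 2 := Finset.sum_comm
  rw [eswap1, eswap2]
  have perk : ∀ k : Fin r,
      (-((Q₁ᵀ * C * R₁) k k) / g₁ k ^ 2 + ε * Real.log (g₁ k)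
        - (-((Q₂ᵀ * C * R₂) k k) / g₂ k ^ 2 + ε * Real.log (g₂ k))) ^ 2
      ≤ 3 * (specNorm C ^ 2 * α⁻¹ ^ 2 * (∑ i, (Real.log (Q₁ i k) - Real.log (Q₂ i k)) ^ 2)
          + specNorm C ^ 2 * α⁻¹ ^ 4 * (∑ j, (Real.log (R₁ j k) - Real.log (R₂ j k)) ^ 2)
          + ((2 * specNorm C + ε) * α⁻¹ ^ 2) ^ 2 *
            (Real.log (g₁ k) - Real.log (g₂ k)) ^ 2) := by
    intro k
    have hg10 : 0 < g₁ k := lt_of_lt_of_le hα (hg1 k)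
    have hg20 : 0 < g₂ k := lt_of_lt_of_le hα (hg2 k)
    have hp : α ^ 2 ≤ g₁ k ^ 2 := pow_le_pow_left₀ hα.le (hg1 k) 2
    have hM : ∀ (Q : Mat n r) (R : Mat m r),
        (Qᵀ * C * R) k k = ∑ i, Q i k * (∑ j, C i j * R j k) := by
      intro Q R
      rw [Matrix.mul_assoc, Matrix.mul_apply]
      simp only [Matrix.transpose_apply, Matrix.mul_apply]
    -- abbreviations
    set T1 := ∑ i, (Q₁ i k - Q₂ i k) * (∑ j, C i j * R₁ j k) with hT1def
    set T2 := ∑ i, Q₂ i k * (∑ j, C i j * (R₁ j k - R₂ j k)) with hT2def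
    set M2 := ∑ i, Q₂ i k * (∑ j, C i j * R₂ j k) with hM2def
    have hsplit : (Q₁ᵀ * C * R₁) k k = T1 + T2 + M2 := by
      rw [hM, hT1def, hT2def, hM2def]
      simp only [sub_mul, mul_sub, Finset.sum_sub_distrib]
      ring
    have hdec : -((Q₁ᵀ * C * R₁) k k) / g₁ k ^ 2 + ε * Real.log (g₁ k)
        - (-((Q₂ᵀ * C * R₂) k k) / g₂ k ^ 2 + ε * Real.log (g₂ k))
        = (-(T1 / g₁ k ^ 2)) + (-(T2 / g₁ k ^ 2))
          + (ε * (Real.log (g₁ k) - Real.log (g₂ k))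
            - M2 * ((g₁ k ^ 2)⁻¹ - (g₂ k ^ 2)⁻¹)) := by
      rw [hsplit, hM Q₂ R₂, ← hM2def]
      field_simp
      ring
    -- column sum-of-squares bounds
    have hQ2sq : ∑ i, (Q₂ i k) ^ 2 ≤ 1 := by
      have h1 : ∑ i, (Q₂ i k) ^ 2 ≤ (∑ i, Q₂ i k) ^ 2 :=
        Finset.sum_sq_le_sq_sum_of_nonneg (fun i _ => hQ2nn i k)
      rw [hQ2col k] at h1
      exact h1.trans (by nlinarith [hg20.le, hg2le k])
    have hR1sq : ∑ j, (R₁ j k) ^ 2 ≤ g₁ k ^ 2 := by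
      have h1 : ∑ j, (R₁ j k) ^ 2 ≤ (∑ j, R₁ j k) ^ 2 :=
        Finset.sum_sq_le_sq_sum_of_nonneg (fun j _ => hR1nn j k)
      rwa [hR1col k] at h1
    have hR2sq : ∑ j, (R₂ j k) ^ 2 ≤ 1 := by
      have h1 : ∑ j, (R₂ j k) ^ 2 ≤ (∑ j, R₂ j k) ^ 2 :=
        Finset.sum_sq_le_sq_sum_of_nonneg (fun j _ => hR2nn j k)
      rw [hR2col k] at h1
      exact h1.trans (by nlinarith [hg20.le, hg2le k])
    have hdQ : ∑ i, (Q₁ i k - Q₂ i k) ^ 2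
        ≤ ∑ i, (Real.log (Q₁ i k) - Real.log (Q₂ i k)) ^ 2 := by
      refine Finset.sum_le_sum fun i _ => ?_
      have h := sq_le_of_abs_le'' (log_lips' (hQ1pos i k) (hQ1le i k) (hQ2pos i k) (hQ2le i k))
      rwa [sq_abs] at h
    have hdR : ∑ j, (R₁ j k - R₂ j k) ^ 2
        ≤ ∑ j, (Real.log (R₁ j k) - Real.log (R₂ j k)) ^ 2 := by
      refine Finset.sum_le_sum fun j _ => ?_
      have h := sq_le_of_abs_le'' (log_lips' (hR1pos j k) (hR1le j k) (hR2pos j k) (hR2le j k))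
      rwa [sq_abs] at h
    -- B1
    have hB1 : (-(T1 / g₁ k ^ 2)) ^ 2 ≤ specNorm C ^ 2 * α⁻¹ ^ 2 *
        ∑ i, (Real.log (Q₁ i k) - Real.log (Q₂ i k)) ^ 2 := by
      have hc1 : ∑ i, (∑ j, C i j * R₁ j k) ^ 2 ≤ specNorm C ^ 2 * g₁ k ^ 2 :=
        (spec_bound' C _).trans (mul_le_mul_of_nonneg_left hR1sq (by positivity))
      have hT1 : T1 ^ 2 ≤ (∑ i, (Real.log (Q₁ i k) - Real.log (Q₂ i k)) ^ 2)
          * (specNorm C ^ 2 * g₁ k ^ 2) := by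
        calc T1 ^ 2 ≤ (∑ i, (Q₁ i k - Q₂ i k) ^ 2) * (∑ i, (∑ j, C i j * R₁ j k) ^ 2) :=
              Finset.sum_mul_sq_le_sq_mul_sq _ _ _
          _ ≤ _ := mul_le_mul hdQ hc1 (by positivity) (by positivity)
      have hgg : g₁ k ^ 2 ≤ α⁻¹ ^ 2 * (g₁ k ^ 2) ^ 2 := by
        calc g₁ k ^ 2 = α⁻¹ ^ 2 * (α ^ 2 * g₁ k ^ 2) := by field_simp
          _ ≤ α⁻¹ ^ 2 * (g₁ k ^ 2 * g₁ k ^ 2) := by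
              exact mul_le_mul_of_nonneg_left
                (mul_le_mul_of_nonneg_right hp (sq_nonneg _)) (by positivity)
          _ = α⁻¹ ^ 2 * (g₁ k ^ 2) ^ 2 := by ring
      rw [neg_sq, div_pow, div_le_iff₀ (by positivity)]
      calc T1 ^ 2 ≤ (∑ i, (Real.log (Q₁ i k) - Real.log (Q₂ i k)) ^ 2)
            * (specNorm C ^ 2 * g₁ k ^ 2) := hT1
        _ ≤ (∑ i, (Real.log (Q₁ i k) - Real.log (Q₂ i k)) ^ 2)
            * (specNorm C ^ 2 * (α⁻¹ ^ 2 * (g₁ k ^ 2) ^ 2)) := by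
            exact mul_le_mul_of_nonneg_left
              (mul_le_mul_of_nonneg_left hgg (by positivity)) (by positivity)
        _ = specNorm C ^ 2 * α⁻¹ ^ 2 *
            (∑ i, (Real.log (Q₁ i k) - Real.log (Q₂ i k)) ^ 2) * (g₁ k ^ 2) ^ 2 := by ring
    -- B2
    have hB2 : (-(T2 / g₁ k ^ 2)) ^ 2 ≤ specNorm C ^ 2 * α⁻¹ ^ 4 *
        ∑ j, (Real.log (R₁ j k) - Real.log (R₂ j k)) ^ 2 := by
      have hc2 : ∑ i, (∑ j, C i j * (R₁ j k - R₂ j k)) ^ 2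
          ≤ specNorm C ^ 2 * ∑ j, (Real.log (R₁ j k) - Real.log (R₂ j k)) ^ 2 :=
        (spec_bound' C _).trans (mul_le_mul_of_nonneg_left hdR (by positivity))
      have hT2 : T2 ^ 2 ≤ specNorm C ^ 2 * ∑ j, (Real.log (R₁ j k) - Real.log (R₂ j k)) ^ 2 := by
        calc T2 ^ 2 ≤ (∑ i, (Q₂ i k) ^ 2) * (∑ i, (∑ j, C i j * (R₁ j k - R₂ j k)) ^ 2) :=
              Finset.sum_mul_sq_le_sq_mul_sq _ _ _
          _ ≤ 1 * (specNorm C ^ 2 * ∑ j, (Real.log (R₁ j k) - Real.log (R₂ j k)) ^ 2) :=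
              mul_le_mul hQ2sq hc2 (by positivity) zero_le_one
          _ = _ := one_mul _
      have hone : (1:ℝ) ≤ α⁻¹ ^ 4 * (g₁ k ^ 2) ^ 2 := by
        have h4 : (α ^ 2) ^ 2 ≤ (g₁ k ^ 2) ^ 2 := pow_le_pow_left₀ (by positivity) hp 2
        calc (1:ℝ) = α⁻¹ ^ 4 * (α ^ 2) ^ 2 := by
              field_simp
          _ ≤ α⁻¹ ^ 4 * (g₁ k ^ 2) ^ 2 := mul_le_mul_of_nonneg_left h4 (by positivity)
      rw [neg_sq, div_pow, div_le_iff₀ (by positivity)]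
      calc T2 ^ 2 ≤ specNorm C ^ 2 * ∑ j, (Real.log (R₁ j k) - Real.log (R₂ j k)) ^ 2 := hT2
        _ = (specNorm C ^ 2 * ∑ j, (Real.log (R₁ j k) - Real.log (R₂ j k)) ^ 2) * 1 :=
            (mul_one _).symm
        _ ≤ (specNorm C ^ 2 * ∑ j, (Real.log (R₁ j k) - Real.log (R₂ j k)) ^ 2)
            * (α⁻¹ ^ 4 * (g₁ k ^ 2) ^ 2) := by
            refine mul_le_mul_of_nonneg_left hone ?_
            positivity
        _ = specNorm C ^ 2 * α⁻¹ ^ 4 *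
            (∑ j, (Real.log (R₁ j k) - Real.log (R₂ j k)) ^ 2) * (g₁ k ^ 2) ^ 2 := by ring
    -- B3
    have hB3 : (ε * (Real.log (g₁ k) - Real.log (g₂ k))
        - M2 * ((g₁ k ^ 2)⁻¹ - (g₂ k ^ 2)⁻¹)) ^ 2
        ≤ ((2 * specNorm C + ε) * α⁻¹ ^ 2) ^ 2 *
          (Real.log (g₁ k) - Real.log (g₂ k)) ^ 2 := by
      have hM2abs : |M2| ≤ specNorm C := by
        have hc2 : ∑ i, (∑ j, C i j * R₂ j k) ^ 2 ≤ specNorm C ^ 2 :=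
          (spec_bound' C _).trans (by nlinarith [hR2sq, specNorm_nonneg' C])
        have hM2sq : M2 ^ 2 ≤ specNorm C ^ 2 := by
          calc M2 ^ 2 ≤ (∑ i, (Q₂ i k) ^ 2) * (∑ i, (∑ j, C i j * R₂ j k) ^ 2) :=
                Finset.sum_mul_sq_le_sq_mul_sq _ _ _
            _ ≤ 1 * specNorm C ^ 2 := mul_le_mul hQ2sq hc2 (by positivity) zero_le_one
            _ = specNorm C ^ 2 := one_mul _
        calc |M2| = Real.sqrt (M2 ^ 2) := (Real.sqrt_sq_eq_abs _).symm
          _ ≤ Real.sqrt (specNorm C ^ 2) := Real.sqrt_le_sqrt hM2sq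
          _ = specNorm C := Real.sqrt_sq hKnn
      have hΔ := inv_sq_lips' hα (hg1 k) (hg2 k)
      have habs : |ε * (Real.log (g₁ k) - Real.log (g₂ k))
          - M2 * ((g₁ k ^ 2)⁻¹ - (g₂ k ^ 2)⁻¹)|
          ≤ (2 * specNorm C + ε) * α⁻¹ ^ 2 * |Real.log (g₁ k) - Real.log (g₂ k)| := by
        have htri : |ε * (Real.log (g₁ k) - Real.log (g₂ k))
            - M2 * ((g₁ k ^ 2)⁻¹ - (g₂ k ^ 2)⁻¹)|
            ≤ |ε * (Real.log (g₁ k) - Real.log (g₂ k))|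
              + |M2 * ((g₁ k ^ 2)⁻¹ - (g₂ k ^ 2)⁻¹)| := by
          rw [sub_eq_add_neg]
          exact (abs_add_le _ _).trans (by rw [abs_neg])
        have h1 : |ε * (Real.log (g₁ k) - Real.log (g₂ k))|
            = ε * |Real.log (g₁ k) - Real.log (g₂ k)| := by
          rw [abs_mul, abs_of_nonneg hε]
        have h2 : |M2 * ((g₁ k ^ 2)⁻¹ - (g₂ k ^ 2)⁻¹)|
            ≤ specNorm C * (2 * α⁻¹ ^ 2 * |Real.log (g₁ k) - Real.log (g₂ k)|) := by
          rw [abs_mul]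
          exact mul_le_mul hM2abs hΔ (abs_nonneg _) hKnn
        have h3 : ε * |Real.log (g₁ k) - Real.log (g₂ k)|
            + specNorm C * (2 * α⁻¹ ^ 2 * |Real.log (g₁ k) - Real.log (g₂ k)|)
            ≤ (2 * specNorm C + ε) * α⁻¹ ^ 2 * |Real.log (g₁ k) - Real.log (g₂ k)| := by
          have hub := abs_nonneg (Real.log (g₁ k) - Real.log (g₂ k))
          nlinarith [mul_nonneg hε hub]
        linarith [htri, h1 ▸ htri]
      have h := sq_le_of_abs_le'' habs
      calc (ε * (Real.log (g₁ k) - Real.log (g₂ k))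
          - M2 * ((g₁ k ^ 2)⁻¹ - (g₂ k ^ 2)⁻¹)) ^ 2
          ≤ ((2 * specNorm C + ε) * α⁻¹ ^ 2 * |Real.log (g₁ k) - Real.log (g₂ k)|) ^ 2 := h
        _ = ((2 * specNorm C + ε) * α⁻¹ ^ 2) ^ 2 *
            (Real.log (g₁ k) - Real.log (g₂ k)) ^ 2 := by rw [mul_pow, sq_abs]
    calc (-((Q₁ᵀ * C * R₁) k k) / g₁ k ^ 2 + ε * Real.log (g₁ k)
        - (-((Q₂ᵀ * C * R₂) k k) / g₂ k ^ 2 + ε * Real.log (g₂ k))) ^ 2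
        = ((-(T1 / g₁ k ^ 2)) + (-(T2 / g₁ k ^ 2))
          + (ε * (Real.log (g₁ k) - Real.log (g₂ k))
            - M2 * ((g₁ k ^ 2)⁻¹ - (g₂ k ^ 2)⁻¹))) ^ 2 := by rw [hdec]
      _ ≤ 3 * ((-(T1 / g₁ k ^ 2)) ^ 2 + (-(T2 / g₁ k ^ 2)) ^ 2
          + (ε * (Real.log (g₁ k) - Real.log (g₂ k))
            - M2 * ((g₁ k ^ 2)⁻¹ - (g₂ k ^ 2)⁻¹)) ^ 2) := three_sq'' _ _ _
      _ ≤ _ := by linarith [hB1, hB2, hB3]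
  calc ∑ k, (-((Q₁ᵀ * C * R₁) k k) / g₁ k ^ 2 + ε * Real.log (g₁ k)
      - (-((Q₂ᵀ * C * R₂) k k) / g₂ k ^ 2 + ε * Real.log (g₂ k))) ^ 2
      ≤ ∑ k, 3 * (specNorm C ^ 2 * α⁻¹ ^ 2 *
            (∑ i, (Real.log (Q₁ i k) - Real.log (Q₂ i k)) ^ 2)
          + specNorm C ^ 2 * α⁻¹ ^ 4 * (∑ j, (Real.log (R₁ j k) - Real.log (R₂ j k)) ^ 2)
          + ((2 * specNorm C + ε) * α⁻¹ ^ 2) ^ 2 *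
            (Real.log (g₁ k) - Real.log (g₂ k)) ^ 2) :=
        Finset.sum_le_sum fun k _ => perk k
    _ = _ := by
        rw [← Finset.mul_sum, Finset.sum_add_distrib, Finset.sum_add_distrib,
          ← Finset.mul_sum, ← Finset.mul_sum, ← Finset.mul_sum]

set_option maxHeartbeats 4000000 in
/-- Relative Lipschitz bound for the gradient of `F_ε` on `𝒞(a,b,r,α)`:
`‖∇F_ε(ξ₁) − ∇F_ε(ξ₂)‖₂ ≤ L_{ε,α} ‖log ξ₁ − log ξ₂‖₂` with
`L_{ε,α} = sqrt(3 (2‖C‖₂²/α⁴ + ((ε + 2‖C‖₂)/α³)²))`. -/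
theorem gradF_relative_lipschitz {n m : ℕ} (r : ℕ) (hr : 1 ≤ r)
    (a : Fin n → ℝ) (ha : a ∈ posSimplex n)
    (b : Fin m → ℝ) (hb : b ∈ posSimplex m)
    (C : Mat n m) (ε : ℝ) (hε : 0 ≤ ε)
    (α : ℝ) (hα : 0 < α) (hα' : α ≤ 1 / (r : ℝ))
    (L : ℝ)
    (hL : L = Real.sqrt (3 * (2 * specNorm C ^ 2 / α ^ 4 +
      ((ε + 2 * specNorm C) / α ^ 3) ^ 2)))
    (x₁ x₂ : LRTriple n m r)
    (hx₁ : x₁ ∈ CsetAlpha a b r α) (hx₂ : x₂ ∈ CsetAlpha a b r α)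
    (hpos₁ : (∀ i j, 0 < x₁.1 i j) ∧ (∀ i j, 0 < x₁.2.1 i j) ∧ ∀ i, 0 < x₁.2.2 i)
    (hpos₂ : (∀ i j, 0 < x₂.1 i j) ∧ (∀ i j, 0 < x₂.2.1 i j) ∧ ∀ i, 0 < x₂.2.2 i) :
    Real.sqrt (tripleNormSq (gradF C ε x₁ - gradF C ε x₂)) ≤
      L * Real.sqrt (tripleNormSq (logTriple x₁ - logTriple x₂)) := by
  obtain ⟨hQ1pos, hR1pos, hg1pos⟩ := hpos₁
  obtain ⟨hQ2pos, hR2pos, hg2pos⟩ := hpos₂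
  obtain ⟨⟨hQ1nn, hR1nn, hg1α, hQ1row, hR1row⟩, ⟨_, _, _, hQ1col, hR1col⟩⟩ := hx₁
  obtain ⟨⟨hQ2nn, hR2nn, hg2α, hQ2row, hR2row⟩, ⟨_, _, _, hQ2col, hR2col⟩⟩ := hx₂
  obtain ⟨hapos, hasum⟩ := ha
  obtain ⟨hbpos, hbsum⟩ := hb
  have hα1 : α ≤ 1 := by
    refine hα'.trans ?_
    have hr1 : (1:ℝ) ≤ (r:ℝ) := by exact_mod_cast hr
    rw [div_le_one (by linarith)]
    exact hr1
  have hale : ∀ i, a i ≤ 1 := fun i => by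
    have h := Finset.single_le_sum (fun j _ => (hapos j).le) (Finset.mem_univ i)
    rw [hasum] at h; exact h
  have hble : ∀ i, b i ≤ 1 := fun i => by
    have h := Finset.single_le_sum (fun j _ => (hbpos j).le) (Finset.mem_univ i)
    rw [hbsum] at h; exact h
  have hQ1le : ∀ i k, x₁.1 i k ≤ 1 := fun i k => by
    have h := Finset.single_le_sum (fun k' _ => hQ1nn i k') (Finset.mem_univ k)
    rw [hQ1row i] at h; exact h.trans (hale i)
  have hQ2le : ∀ i k, x₂.1 i k ≤ 1 := fun i k => by
    have h := Finset.single_le_sum (fun k' _ => hQ2nn i k') (Finset.mem_univ k)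
    rw [hQ2row i] at h; exact h.trans (hale i)
  have hR1le : ∀ j k, x₁.2.1 j k ≤ 1 := fun j k => by
    have h := Finset.single_le_sum (fun k' _ => hR1nn j k') (Finset.mem_univ k)
    rw [hR1row j] at h; exact h.trans (hble j)
  have hR2le : ∀ j k, x₂.2.1 j k ≤ 1 := fun j k => by
    have h := Finset.single_le_sum (fun k' _ => hR2nn j k') (Finset.mem_univ k)
    rw [hR2row j] at h; exact h.trans (hble j)
  have hg1sum : ∑ k, x₁.2.2 k = 1 := by
    calc ∑ k, x₁.2.2 k = ∑ k, ∑ i, x₁.1 i k :=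
          Finset.sum_congr rfl fun k _ => (hQ1col k).symm
      _ = ∑ i, ∑ k, x₁.1 i k := Finset.sum_comm
      _ = ∑ i, a i := Finset.sum_congr rfl fun i _ => hQ1row i
      _ = 1 := hasum
  have hg2sum : ∑ k, x₂.2.2 k = 1 := by
    calc ∑ k, x₂.2.2 k = ∑ k, ∑ i, x₂.1 i k :=
          Finset.sum_congr rfl fun k _ => (hQ2col k).symm
      _ = ∑ i, ∑ k, x₂.1 i k := Finset.sum_comm
      _ = ∑ i, a i := Finset.sum_congr rfl fun i _ => hQ2row i
      _ = 1 := hasum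
  have hg1le : ∀ k, x₁.2.2 k ≤ 1 := fun k => by
    have h := Finset.single_le_sum (fun k' _ => (hg1pos k').le) (Finset.mem_univ k)
    rw [hg1sum] at h; exact h
  have hg2le : ∀ k, x₂.2.2 k ≤ 1 := fun k => by
    have h := Finset.single_le_sum (fun k' _ => (hg2pos k').le) (Finset.mem_univ k)
    rw [hg2sum] at h; exact h
  have hKnn := specNorm_nonneg' C
  have hSQ : (0:ℝ) ≤ (∑ i, ∑ k, (Real.log (x₁.1 i k) - Real.log (x₂.1 i k)) ^ 2) := by positivity
  have hSR : (0:ℝ) ≤ (∑ j, ∑ k, (Real.log (x₁.2.1 j k) - Real.log (x₂.2.1 j k)) ^ 2) := by positivity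
  have hSg : (0:ℝ) ≤ (∑ k, (Real.log (x₁.2.2 k) - Real.log (x₂.2.2 k)) ^ 2) := by positivity
  have eB : tripleNormSq (logTriple x₁ - logTriple x₂) = (∑ i, ∑ k, (Real.log (x₁.1 i k) - Real.log (x₂.1 i k)) ^ 2) + (∑ j, ∑ k, (Real.log (x₁.2.1 j k) - Real.log (x₂.2.1 j k)) ^ 2) + (∑ k, (Real.log (x₁.2.2 k) - Real.log (x₂.2.2 k)) ^ 2) := rfl
  have key : tripleNormSq (gradF C ε x₁ - gradF C ε x₂)
      ≤ 3 * (2 * specNorm C ^ 2 / α ^ 4 + ((ε + 2 * specNorm C) / α ^ 3) ^ 2)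
        * tripleNormSq (logTriple x₁ - logTriple x₂) := by
    have eA : tripleNormSq (gradF C ε x₁ - gradF C ε x₂)
        = (∑ i, ∑ k, ((C * x₁.2.1) i k * (x₁.2.2 k)⁻¹ + ε * Real.log (x₁.1 i k)
            - ((C * x₂.2.1) i k * (x₂.2.2 k)⁻¹ + ε * Real.log (x₂.1 i k))) ^ 2)
          + (∑ j, ∑ k, ((Cᵀ * x₁.1) j k * (x₁.2.2 k)⁻¹ + ε * Real.log (x₁.2.1 j k)
            - ((Cᵀ * x₂.1) j k * (x₂.2.2 k)⁻¹ + ε * Real.log (x₂.2.1 j k))) ^ 2)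
          + ∑ k, (-((x₁.1ᵀ * C * x₁.2.1) k k) / x₁.2.2 k ^ 2 + ε * Real.log (x₁.2.2 k)
            - (-((x₂.1ᵀ * C * x₂.2.1) k k) / x₂.2.2 k ^ 2 + ε * Real.log (x₂.2.2 k))) ^ 2 := rfl
    have HQ := blockQ_bound C ε α hα x₁.1 x₂.1 x₁.2.1 x₂.2.1 x₁.2.2 x₂.2.2
      hg1α hg2α hg2le hR1pos hR1le hR2pos hR2le hR2nn hR2col hQ1pos hQ1le hQ2pos hQ2le
    have HR := blockQ_bound Cᵀ ε α hα x₁.2.1 x₂.2.1 x₁.1 x₂.1 x₁.2.2 x₂.2.2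
      hg1α hg2α hg2le hQ1pos hQ1le hQ2pos hQ2le hQ2nn hQ2col hR1pos hR1le hR2pos hR2le
    rw [specNorm_transpose'] at HR
    have Hg := blockg_bound C ε α hε hα hα1 x₁.1 x₂.1 x₁.2.1 x₂.2.1 x₁.2.2 x₂.2.2
      hg1α hg2α hg1le hg2le hQ1pos hQ1le hQ2pos hQ2le hQ2nn hQ2col
      hR1pos hR1le hR2pos hR2le hR1nn hR1col hR2nn hR2col
    have HA := assemble' (specNorm C) ε α (∑ i, ∑ k, (Real.log (x₁.1 i k) - Real.log (x₂.1 i k)) ^ 2) (∑ j, ∑ k, (Real.log (x₁.2.1 j k) - Real.log (x₂.2.1 j k)) ^ 2) (∑ k, (Real.log (x₁.2.2 k) - Real.log (x₂.2.2 k)) ^ 2) hKnn hε hα hα1 hSQ hSR hSg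
    rw [eA, eB]
    linarith
  rw [hL]
  have hc : (0:ℝ) ≤ 3 * (2 * specNorm C ^ 2 / α ^ 4 + ((ε + 2 * specNorm C) / α ^ 3) ^ 2) := by
    positivity
  calc Real.sqrt (tripleNormSq (gradF C ε x₁ - gradF C ε x₂))
      ≤ Real.sqrt (3 * (2 * specNorm C ^ 2 / α ^ 4 + ((ε + 2 * specNorm C) / α ^ 3) ^ 2)
        * tripleNormSq (logTriple x₁ - logTriple x₂)) := Real.sqrt_le_sqrt key
    _ = Real.sqrt (3 * (2 * specNorm C ^ 2 / α ^ 4 + ((ε + 2 * specNorm C) / α ^ 3) ^ 2))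
        * Real.sqrt (tripleNormSq (logTriple x₁ - logTriple x₂)) := Real.sqrt_mul hc _
end

section
/- Let X ⊆ ℝ^q be a nonempty closed convex set, let h be convex and continuously differentiable on a neighborhood of X, and let D_h(x,z) := h(x) − h(z) − ⟨∇h(z), x − z⟩ be the associated Bregman divergence. Let f be continuously differentiable on a neighborhood of X, L-smooth relative to h on X for some L > 0, and suppose f attains its minimum on X. Set γ := 1/(2L). Let x₀ ∈ X and, for k ≥ 0, let x_{k+1} ∈ X be a minimizer over X of x ↦ ⟨∇f(x_k), x⟩ + (1/γ) D_h(x, x_k) (assume such minimizers exist). Define Δ_k := (1/γ²)( D_h(x_k, x_{k+1}) + D_h(x_{k+1}, x_k) ). Then for every N ≥ 1, min_{0 ≤ k ≤ N−1} Δ_k ≤ 4 L D₀ / N, where D₀ := f(x₀) − min_{x ∈ X} f(x). -/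
open Matrix Finset Real
open scoped RealInnerProductSpace

section Helpers
open scoped Topology

lemma slope_core {g : ℝ → ℝ} {a c : ℝ} (hg : HasDerivAt g a 0)
    (h : ∀ t ∈ Set.Ioc (0:ℝ) 1, g t - g 0 ≤ t * c) : a ≤ c := by
  have hslope : Filter.Tendsto (slope g 0) (𝓝[Set.Ioi 0 \ {0}] 0) (𝓝 a) :=
    (hasDerivWithinAt_iff_tendsto_slope.mp (hg.hasDerivWithinAt (s := Set.Ioi 0)))
  have hsub : (Set.Ioi (0:ℝ) \ {0}) = Set.Ioi 0 := by
    ext x; simp (config := {contextual := true}) [ne_of_gt]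
  rw [hsub] at hslope
  refine le_of_tendsto hslope ?_
  filter_upwards [Ioc_mem_nhdsGT_of_mem (Set.mem_Ico.mpr ⟨le_refl 0, one_pos⟩)] with t ht
  have h2 := h t ht
  rw [slope_def_field, sub_zero, div_le_iff₀ ht.1]
  linarith

lemma line_deriv {q : ℕ} {h : EuclideanSpace ℝ (Fin q) → ℝ}
    {p d : EuclideanSpace ℝ (Fin q)} (hd : DifferentiableAt ℝ h p) :
    HasDerivAt (fun t : ℝ => h (p + t • d)) ⟪gradient h p, d⟫ 0 := by
  have hline : HasDerivAt (fun t : ℝ => p + t • d) d 0 := by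
    simpa using ((hasDerivAt_id (0:ℝ)).smul_const d).const_add p
  have hfd := hd.hasGradientAt.hasFDerivAt
  rw [show p = p + (0:ℝ) • d by simp] at hfd
  have := hfd.comp_hasDerivAt (x := (0:ℝ)) hline
  simpa [InnerProductSpace.toDual_apply_apply, Function.comp_def] using this

lemma inner_line_deriv {q : ℕ} (v p d : EuclideanSpace ℝ (Fin q)) :
    HasDerivAt (fun t : ℝ => ⟪v, p + t • d⟫) ⟪v, d⟫ 0 := by
  have : (fun t : ℝ => ⟪v, p + t • d⟫) = fun t => ⟪v, p⟫ + t * ⟪v, d⟫ := by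
    funext t; rw [inner_add_right, real_inner_smul_right]
  rw [this]
  simpa using (hasDerivAt_mul_const (x := (0:ℝ)) ⟪v, d⟫).const_add ⟪v, p⟫

lemma seg_mem {q : ℕ} {X : Set (EuclideanSpace ℝ (Fin q))} (hX : Convex ℝ X)
    {p z : EuclideanSpace ℝ (Fin q)} (hp : p ∈ X) (hz : z ∈ X) {t : ℝ}
    (ht0 : 0 ≤ t) (ht1 : t ≤ 1) : p + t • (z - p) ∈ X := by
  have : p + t • (z - p) = (1 - t) • p + t • z := by module
  rw [this]
  exact hX hp hz (by linarith) ht0 (by ring)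

lemma breg_grad_ineq {q : ℕ} {X : Set (EuclideanSpace ℝ (Fin q))}
    {h : EuclideanSpace ℝ (Fin q) → ℝ} (hhconv : ConvexOn ℝ X h)
    {w z : EuclideanSpace ℝ (Fin q)} (hw : w ∈ X) (hz : z ∈ X)
    (hd : DifferentiableAt ℝ h z) : ⟪gradient h z, w - z⟫ ≤ h w - h z := by
  refine slope_core (line_deriv hd) ?_
  intro t ht
  have hmem : z + t • (w - z) = (1 - t) • z + t • w := by module
  have hcv := hhconv.2 hz hw (show (0:ℝ) ≤ 1 - t by linarith [ht.2]) ht.1.le (by ring)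
  simp only [smul_eq_mul] at hcv
  rw [hmem]
  simp only [zero_smul, add_zero]
  linarith

lemma key_step {q : ℕ} {X : Set (EuclideanSpace ℝ (Fin q))} (hXconv : Convex ℝ X)
    {h f : EuclideanSpace ℝ (Fin q) → ℝ}
    {Dh : EuclideanSpace ℝ (Fin q) → EuclideanSpace ℝ (Fin q) → ℝ}
    (hDh : ∀ x z, Dh x z = h x - h z - ⟪gradient h z, x - z⟫)
    {L γ : ℝ} (hL : 0 < L) (hγinv : 1 / γ = 2 * L)
    {z p : EuclideanSpace ℝ (Fin q)} (hz : z ∈ X) (hp : p ∈ X)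
    (hdhp : DifferentiableAt ℝ h p)
    (hsm : f p ≤ f z + ⟪gradient f z, p - z⟫ + L * Dh p z)
    (hmin : ∀ y ∈ X, ⟪gradient f z, p⟫ + (1 / γ) * Dh p z ≤
      ⟪gradient f z, y⟫ + (1 / γ) * Dh y z)
    (hDzp : 0 ≤ Dh z p) :
    L * (Dh z p + Dh p z) ≤ f z - f p := by
  set d := z - p with hd
  set gf := gradient f z with hgf
  set ghz := gradient h z with hghz
  set ghp := gradient h p with hghp
  set g : ℝ → ℝ := fun t =>
    ⟪gf, p + t • d⟫ + (1 / γ) * (h (p + t • d) - h z - (⟪ghz, p + t • d⟫ - ⟪ghz, z⟫))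
    with hgdef
  have hder : HasDerivAt g (⟪gf, d⟫ + (1 / γ) * (⟪ghp, d⟫ - ⟪ghz, d⟫)) 0 :=
    (inner_line_deriv gf p d).add
      ((((line_deriv hdhp).sub_const (h z)).sub
        ((inner_line_deriv ghz p d).sub_const ⟪ghz, z⟫)).const_mul (1 / γ))
  have hgval : ∀ t : ℝ, g t = ⟪gf, p + t • d⟫ + (1 / γ) * Dh (p + t • d) z := by
    intro t
    rw [hgdef, hDh, inner_sub_right]
  have hg0 : g 0 = ⟪gf, p⟫ + (1 / γ) * Dh p z := by
    rw [hgval 0]; simp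
  have hVI : 0 ≤ ⟪gf, d⟫ + (1 / γ) * (⟪ghp, d⟫ - ⟪ghz, d⟫) := by
    have hmin2 : ∀ t ∈ Set.Ioc (0 : ℝ) 1,
        (fun t => -g t) t - (fun t => -g t) 0 ≤ t * 0 := by
      intro t ht
      have hyX : p + t • d ∈ X := seg_mem hXconv hp hz ht.1.le ht.2
      have h2 := hmin (p + t • d) hyX
      rw [← hg0, ← hgval t] at h2
      simp only [mul_zero]
      linarith
    have := slope_core hder.neg hmin2
    linarith
  have hsum2 : Dh z p + Dh p z = ⟪ghz, d⟫ - ⟪ghp, d⟫ := by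
    rw [hDh, hDh]
    have e1 : ⟪ghp, z - p⟫ = ⟪ghp, d⟫ := by rw [hd]
    have e2 : ⟪ghz, p - z⟫ = -⟪ghz, d⟫ := by
      rw [hd, show p - z = -(z - p) by abel, inner_neg_right]
    rw [e1, e2]; ring
  have hVI' : 2 * L * (Dh z p + Dh p z) ≤ ⟪gf, d⟫ := by
    rw [hγinv] at hVI
    rw [hsum2]
    nlinarith [hVI]
  have e3 : ⟪gf, p - z⟫ = -⟪gf, d⟫ := by
    rw [hd, show p - z = -(z - p) by abel, inner_neg_right]
  rw [e3] at hsm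
  have hnn : 0 ≤ L * Dh z p := mul_nonneg hL.le hDzp
  nlinarith [hVI', hsm, hnn]

end Helpers

/-- Generic non-asymptotic stationary convergence of mirror descent:
if `f` is `L`-smooth relative to `h` on a closed convex set `X`, attains its minimum on
`X`, and the iterates minimize the linearized prox objective with step `γ = 1/(2L)`, then
`min_{0 ≤ k ≤ N−1} Δ_k ≤ 4 L D₀ / N`. -/
theorem mirror_descent_generic_convergence (q : ℕ)
    (X : Set (EuclideanSpace ℝ (Fin q)))
    (hXne : X.Nonempty) (hXclosed : IsClosed X) (hXconv : Convex ℝ X)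
    (U : Set (EuclideanSpace ℝ (Fin q))) (hU : IsOpen U) (hXU : X ⊆ U)
    (h f : EuclideanSpace ℝ (Fin q) → ℝ)
    (hhconv : ConvexOn ℝ X h) (hhdiff : ContDiffOn ℝ 1 h U)
    (hfdiff : ContDiffOn ℝ 1 f U)
    (Dh : EuclideanSpace ℝ (Fin q) → EuclideanSpace ℝ (Fin q) → ℝ)
    (hDh : ∀ x z, Dh x z = h x - h z - ⟪gradient h z, x - z⟫)
    (L : ℝ) (hL : 0 < L)
    (hsmooth : ∀ x ∈ X, ∀ y ∈ X, f y ≤ f x + ⟪gradient f x, y - x⟫ + L * Dh y x)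
    (xmin : EuclideanSpace ℝ (Fin q)) (hxmin : xmin ∈ X)
    (hxminmin : ∀ y ∈ X, f xmin ≤ f y)
    (γ : ℝ) (hγ : γ = 1 / (2 * L))
    (x : ℕ → EuclideanSpace ℝ (Fin q)) (hx0 : x 0 ∈ X)
    (hiter : ∀ k : ℕ, x (k + 1) ∈ X ∧ ∀ y ∈ X,
      ⟪gradient f (x k), x (k + 1)⟫ + (1 / γ) * Dh (x (k + 1)) (x k) ≤
        ⟪gradient f (x k), y⟫ + (1 / γ) * Dh y (x k))
    (N : ℕ) (hN : 1 ≤ N)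
    (D₀ : ℝ) (hD₀ : D₀ = f (x 0) - f xmin) :
    ∃ k < N, (1 / γ ^ 2) * (Dh (x k) (x (k + 1)) + Dh (x (k + 1)) (x k)) ≤
      4 * L * D₀ / N := by
  have hhd : ∀ z ∈ X, DifferentiableAt ℝ h z := fun z hz =>
    (hhdiff.differentiableOn one_ne_zero).differentiableAt (hU.mem_nhds (hXU hz))
  have hmem : ∀ k, x k ∈ X := fun k => Nat.rec hx0 (fun n _ => (hiter n).1) k
  have hγinv : 1 / γ = 2 * L := by rw [hγ]; field_simp
  have hDnn : ∀ w ∈ X, ∀ z ∈ X, 0 ≤ Dh w z := by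
    intro w hw z hz
    rw [hDh]
    have := breg_grad_ineq hhconv hw hz (hhd z hz)
    linarith
  have key : ∀ k, L * (Dh (x k) (x (k + 1)) + Dh (x (k + 1)) (x k)) ≤
      f (x k) - f (x (k + 1)) := by
    intro k
    exact key_step hXconv hDh hL hγinv (hmem k) (hmem (k + 1))
      (hhd _ (hmem (k + 1)))
      (hsmooth _ (hmem k) _ (hmem (k + 1)))
      (hiter k).2
      (hDnn _ (hmem k) _ (hmem (k + 1)))
  set S : ℕ → ℝ := fun k => Dh (x k) (x (k + 1)) + Dh (x (k + 1)) (x k) with hSdef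
  have hNpos : (0 : ℝ) < N := by exact_mod_cast Nat.lt_of_lt_of_le Nat.zero_lt_one hN
  have hsum : L * ∑ k ∈ Finset.range N, S k ≤ D₀ := by
    have h1 : ∑ k ∈ Finset.range N, (f (x k) - f (x (k + 1))) = f (x 0) - f (x N) :=
      Finset.sum_range_sub' (fun k => f (x k)) N
    have h2 : ∑ k ∈ Finset.range N, L * S k ≤
        ∑ k ∈ Finset.range N, (f (x k) - f (x (k + 1))) :=
      Finset.sum_le_sum fun k _ => key k
    rw [Finset.mul_sum]
    have h3 : f xmin ≤ f (x N) := hxminmin _ (hmem N)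
    rw [h1] at h2
    linarith
  obtain ⟨k₀, hk₀mem, hk₀min⟩ :=
    Finset.exists_min_image (Finset.range N) S ⟨0, Finset.mem_range.mpr hN⟩
  refine ⟨k₀, Finset.mem_range.mp hk₀mem, ?_⟩
  have hcard : (N : ℝ) * S k₀ ≤ ∑ k ∈ Finset.range N, S k := by
    have := Finset.card_nsmul_le_sum (Finset.range N) S (S k₀) (fun i hi => hk₀min i hi)
    simpa [nsmul_eq_mul] using this
  have hLNS : L * ((N : ℝ) * S k₀) ≤ D₀ :=
    le_trans (mul_le_mul_of_nonneg_left hcard hL.le) hsum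
  have hγ2 : 1 / γ ^ 2 = 4 * L ^ 2 := by rw [hγ]; field_simp; ring
  show (1 / γ ^ 2) * S k₀ ≤ 4 * L * D₀ / N
  rw [hγ2, le_div_iff₀ hNpos]
  have h4 := mul_le_mul_of_nonneg_left hLNS (show (0:ℝ) ≤ 4 * L by positivity)
  nlinarith [h4]
end
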